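/- arXiv:2210.08599 — 2 statements merged into one kernel-verified Lean document; each statement's English description precedes it below -/
import Mathlib

section
/- Let L ≥ 1, α ∈ (0,1), and Δ = (α^{1/2} − α)/L. Suppose ξ = {ξ_t}_{t=0}^T is a stochastic process with finite support, the deterministic matrix pair (A,B) is (L,α)-stabilizable (there exists K with ‖K‖ ≤ L such that A − BK is (L,α)-stable), and the random matrices satisfy ‖A − A(ξ_t)‖ ≤ Δ/2 and ‖B − B(ξ_t)‖ ≤ Δ/(2L) almost surely for all t ∈ {1,…,T}. Then the random pair ({A(ξ_t)}_{t=1}^T, {B(ξ_t)}_{t=1}^T) is (L, α^{1/2})-stabilizable: there exist almost surely L-bounded nonanticipative matrices K_t(ξ_{0:t}), t ∈ {0,…,T−1}, such that ‖∏_{t=t'+1}^{t''} (A(ξ_t) − B(ξ_t)K_{t−1}(ξ_{0:t−1}))‖ ≤ L α^{(t''−t')/2} almost surely for all 0 ≤ t' < t'' ≤ T. -/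
open Matrix BigOperators

/-- Operator 2-norm of a real matrix, i.e. the norm of the induced linear map between
Euclidean spaces. -/
noncomputable def opNorm {m n : Type*} [Fintype m] [Fintype n] [DecidableEq n]
    (A : Matrix m n ℝ) : ℝ :=
  ‖LinearMap.toContinuousLinearMap (Matrix.toEuclideanLin A)‖

/-- `mprod Φ a k = Φ (a+k-1) * ⋯ * Φ (a+1) * Φ a`: the ordered product of `k` factors
starting at index `a` (larger indices on the left). -/
def mprod {n : ℕ} (Φ : ℕ → Matrix (Fin n) (Fin n) ℝ) (a : ℕ) : ℕ → Matrix (Fin n) (Fin n) ℝ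
  | 0 => 1
  | k + 1 => Φ (a + k) * mprod Φ a k

/-- Squared Euclidean norm of a vector. -/
noncomputable def sqnorm {m : Type*} [Fintype m] (v : m → ℝ) : ℝ := ∑ i, v i ^ 2

/-- A discrete-time stochastic process with finitely many scenarios, each of positive
probability (so “almost surely” means “for every scenario”).  `ξ t s` is the value of the
process at time `t` in scenario `s`. -/
structure FiniteProcess (Ξ : Type) where
  S : Type
  [finS : Fintype S]
  P : S → ℝ
  P_pos : ∀ s, 0 < P s
  P_sum : ∑ s, P s = 1
  ξ : ℕ → S → Ξ

attribute [instance] FiniteProcess.finS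

namespace FiniteProcess

variable {Ξ : Type} (proc : FiniteProcess Ξ)

/-- Two scenarios have the same past `ξ₀,…,ξ_t`. -/
def PrefixEq (t : ℕ) (s s' : proc.S) : Prop := ∀ τ ≤ t, proc.ξ τ s = proc.ξ τ s'

/-- `f` depends only on `ξ₀,…,ξ_t` (nonanticipativity). -/
def Adapted (t : ℕ) {β : Type*} (f : proc.S → β) : Prop :=
  ∀ s s', proc.PrefixEq t s s' → f s = f s'

open Classical in
/-- Conditional expectation of `f` given `ξ₀,…,ξ_t` equal to the prefix of scenario `sb`. -/
noncomputable def cexp (t : ℕ) (sb : proc.S) (f : proc.S → ℝ) : ℝ :=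
  (∑ s, if proc.PrefixEq t s sb then proc.P s * f s else 0) /
    (∑ s, if proc.PrefixEq t s sb then proc.P s else 0)

open Classical in
/-- Probability of an event. -/
noncomputable def prob (E : proc.S → Prop) : ℝ := ∑ s, if E s then proc.P s else 0

end FiniteProcess

open scoped Matrix.Norms.L2Operator

lemma opNorm_eq_norm {m n : Type*} [Fintype m] [Fintype n] [DecidableEq n]
    (A : Matrix m n ℝ) : opNorm A = ‖A‖ := rfl

lemma mprod_expand {n : ℕ} (Φ : ℕ → Matrix (Fin n) (Fin n) ℝ)
    (M : Matrix (Fin n) (Fin n) ℝ) (a : ℕ) :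
    ∀ k, mprod Φ a k = M ^ k + ∑ j ∈ Finset.range k,
      M ^ (k - 1 - j) * (Φ (a + j) - M) * mprod Φ a j := by
  intro k
  induction k with
  | zero => simp [mprod]
  | succ k ih =>
      have hsplit : Φ (a + k) * mprod Φ a k
          = M * mprod Φ a k + (Φ (a + k) - M) * mprod Φ a k := by
        rw [← add_mul]; congr 1; abel
      have h1 : ∀ j ∈ Finset.range k,
          M * (M ^ (k - 1 - j) * (Φ (a + j) - M) * mprod Φ a j)
          = M ^ (k + 1 - 1 - j) * (Φ (a + j) - M) * mprod Φ a j := by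
        intro j hj
        have hj' : j < k := Finset.mem_range.mp hj
        have he : k + 1 - 1 - j = (k - 1 - j) + 1 := by omega
        rw [he, pow_succ', mul_assoc, mul_assoc, mul_assoc]
      have h2 : M ^ (k + 1 - 1 - k) = (1 : Matrix (Fin n) (Fin n) ℝ) := by
        have : k + 1 - 1 - k = 0 := by omega
        rw [this, pow_zero]
      calc mprod Φ a (k+1) = Φ (a + k) * mprod Φ a k := rfl
        _ = M * mprod Φ a k + (Φ (a + k) - M) * mprod Φ a k := hsplit
        _ = M * (M ^ k + ∑ j ∈ Finset.range k,
              M ^ (k - 1 - j) * (Φ (a + j) - M) * mprod Φ a j)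
            + (Φ (a + k) - M) * mprod Φ a k := by rw [← ih]
        _ = M ^ (k+1) + (∑ j ∈ Finset.range k,
              M ^ (k + 1 - 1 - j) * (Φ (a + j) - M) * mprod Φ a j)
            + M ^ (k + 1 - 1 - k) * (Φ (a + k) - M) * mprod Φ a k := by
            rw [mul_add, Finset.mul_sum, ← pow_succ', Finset.sum_congr rfl h1, h2, one_mul]
        _ = M ^ (k+1) + ∑ j ∈ Finset.range (k+1),
              M ^ (k + 1 - 1 - j) * (Φ (a + j) - M) * mprod Φ a j := by
            rw [Finset.sum_range_succ]; abel


/-- Proposition `just`, part (b).  Let `L ≥ 1`, `α ∈ (0,1)`,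
`Δ = (√α − α)/L`.  If the deterministic pair `(A,B)` is `(L,α)`-stabilizable and the
random matrices satisfy `‖A − A(ξ_t)‖ ≤ Δ/2`, `‖B − B(ξ_t)‖ ≤ Δ/(2L)` a.s. for
`t ∈ {1,…,T}`, then the random pair `({A(ξ_t)},{B(ξ_t)})` is `(L,√α)`-stabilizable:
there are a.s. `L`-bounded nonanticipative feedbacks `K_t(ξ_{0:t})`, `t ∈ {0,…,T−1}`,
such that `‖∏_{t=t'+1}^{t''}(A(ξ_t) − B(ξ_t)K_{t−1}(ξ_{0:t−1}))‖ ≤ L α^{(t''−t')/2}`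
almost surely for all `0 ≤ t' < t'' ≤ T`. -/
theorem stochastic_stabilizability_of_perturbed_stabilizable
    {T nx nu : ℕ} {Ξ : Type} (proc : FiniteProcess Ξ)
    (L α : ℝ) (hL : 1 ≤ L) (hα0 : 0 < α) (hα1 : α < 1)
    (A : Matrix (Fin nx) (Fin nx) ℝ) (B : Matrix (Fin nx) (Fin nu) ℝ)
    (Af : Ξ → Matrix (Fin nx) (Fin nx) ℝ) (Bf : Ξ → Matrix (Fin nx) (Fin nu) ℝ)
    (hstabilizable : ∃ K : Matrix (Fin nu) (Fin nx) ℝ, opNorm K ≤ L ∧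
      ∀ t : ℕ, opNorm ((A - B * K) ^ t) ≤ L * α ^ t)
    (hcloseA : ∀ (s : proc.S) (t : ℕ), 1 ≤ t → t ≤ T →
      opNorm (A - Af (proc.ξ t s)) ≤ (Real.sqrt α - α) / L / 2)
    (hcloseB : ∀ (s : proc.S) (t : ℕ), 1 ≤ t → t ≤ T →
      opNorm (B - Bf (proc.ξ t s)) ≤ (Real.sqrt α - α) / L / (2 * L)) :
    ∃ K : ℕ → proc.S → Matrix (Fin nu) (Fin nx) ℝ,
      (∀ t, t < T → proc.Adapted t (K t)) ∧
      (∀ (t : ℕ) (s : proc.S), t < T → opNorm (K t s) ≤ L) ∧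
      ∀ (s : proc.S) (t' k : ℕ), 1 ≤ k → t' + k ≤ T →
        opNorm (mprod (fun t => Af (proc.ξ t s) - Bf (proc.ξ t s) * K (t - 1) s) (t' + 1) k)
          ≤ L * Real.sqrt (α ^ k) := by

  obtain ⟨K, hKnorm, hpow⟩ := hstabilizable
  have hL0 : (0:ℝ) < L := lt_of_lt_of_le one_pos hL
  set β := Real.sqrt α with hβdef
  have hβpos : 0 < β := Real.sqrt_pos.mpr hα0
  have hb2 : β ^ 2 = α := Real.sq_sqrt hα0.le
  have hαβ : α < β := by nlinarith
  have hΔ0 : 0 ≤ (β - α) / L := div_nonneg (by linarith) hL0.le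
  refine ⟨fun _ _ => K, fun t _ s s' _ => rfl, fun t s _ => hKnorm, ?_⟩
  intro s t' k hk1 hle
  have hsqrtpow : Real.sqrt (α ^ k) = β ^ k := by
    rw [hβdef, ← Real.sqrt_sq (pow_nonneg (Real.sqrt_nonneg α) k)]
    congr 1
    rw [← pow_mul, mul_comm k 2, pow_mul, Real.sq_sqrt hα0.le]
  rw [hsqrtpow]
  set M := A - B * K with hM
  set Φ : ℕ → Matrix (Fin nx) (Fin nx) ℝ :=
    fun t => Af (proc.ξ t s) - Bf (proc.ξ t s) * K with hΦ
  have hE : ∀ t, 1 ≤ t → t ≤ T → ‖Φ t - M‖ ≤ (β - α) / L := by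
    intro t h1 h2
    have h3 : Φ t - M = -(A - Af (proc.ξ t s)) + (B - Bf (proc.ξ t s)) * K := by
      rw [Matrix.sub_mul]
      simp only [hΦ, hM]
      abel
    rw [h3]
    calc ‖-(A - Af (proc.ξ t s)) + (B - Bf (proc.ξ t s)) * K‖
        ≤ ‖-(A - Af (proc.ξ t s))‖ + ‖(B - Bf (proc.ξ t s)) * K‖ := norm_add_le _ _
      _ ≤ ‖A - Af (proc.ξ t s)‖ + ‖B - Bf (proc.ξ t s)‖ * ‖K‖ := by
          rw [norm_neg]
          exact add_le_add le_rfl (Matrix.l2_opNorm_mul _ _)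
      _ ≤ (β - α) / L / 2 + (β - α) / L / (2 * L) * L := by
          refine add_le_add ?_ ?_
          · exact hcloseA s t h1 h2
          · exact mul_le_mul (hcloseB s t h1 h2) hKnorm (norm_nonneg _) (by positivity)
      _ = (β - α) / L := by field_simp; ring
  have key : ∀ k, t' + k ≤ T → ‖mprod Φ (t' + 1) k‖ ≤ L * β ^ k := by
    intro k
    induction k using Nat.strong_induction_on with
    | _ k ih =>
      intro hkT
      rw [mprod_expand Φ M (t' + 1) k]
      have hgeom : (β - α) * ∑ j ∈ Finset.range k, β ^ j * α ^ (k - 1 - j)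
          = β ^ k - α ^ k := by
        rw [mul_comm]
        exact geom_sum₂_mul β α k
      calc ‖M ^ k + ∑ j ∈ Finset.range k,
              M ^ (k - 1 - j) * (Φ (t' + 1 + j) - M) * mprod Φ (t' + 1) j‖
          ≤ ‖M ^ k‖ + ∑ j ∈ Finset.range k,
              ‖M ^ (k - 1 - j) * (Φ (t' + 1 + j) - M) * mprod Φ (t' + 1) j‖ :=
            le_trans (norm_add_le _ _) (add_le_add le_rfl (norm_sum_le _ _))
        _ ≤ L * α ^ k + ∑ j ∈ Finset.range k,
              (L * α ^ (k - 1 - j)) * ((β - α) / L) * (L * β ^ j) := by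
            refine add_le_add (hpow k) (Finset.sum_le_sum ?_)
            intro j hj
            have hjk : j < k := Finset.mem_range.mp hj
            have hb1 : ‖(M : Matrix (Fin nx) (Fin nx) ℝ) ^ (k - 1 - j)‖ ≤ L * α ^ (k - 1 - j) :=
              hpow (k - 1 - j)
            have hb2 : ‖Φ (t' + 1 + j) - M‖ ≤ (β - α) / L :=
              hE (t' + 1 + j) (by omega) (by omega)
            have hb3 : ‖mprod Φ (t' + 1) j‖ ≤ L * β ^ j := ih j hjk (by omega)
            calc ‖M ^ (k - 1 - j) * (Φ (t' + 1 + j) - M) * mprod Φ (t' + 1) j‖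
                ≤ ‖M ^ (k - 1 - j) * (Φ (t' + 1 + j) - M)‖ * ‖mprod Φ (t' + 1) j‖ :=
                  norm_mul_le _ _
              _ ≤ (‖M ^ (k - 1 - j)‖ * ‖Φ (t' + 1 + j) - M‖) * ‖mprod Φ (t' + 1) j‖ :=
                  mul_le_mul_of_nonneg_right (norm_mul_le _ _) (norm_nonneg _)
              _ ≤ ((L * α ^ (k - 1 - j)) * ((β - α) / L)) * (L * β ^ j) := by
                  refine mul_le_mul ?_ hb3 (norm_nonneg _) (by positivity)
                  exact mul_le_mul hb1 hb2 (norm_nonneg _) (by positivity)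
        _ = L * α ^ k + L * ((β - α) * ∑ j ∈ Finset.range k, β ^ j * α ^ (k - 1 - j)) := by
            rw [Finset.mul_sum, Finset.mul_sum]
            congr 1
            refine Finset.sum_congr rfl fun j _ => ?_
            field_simp
        _ = L * α ^ k + L * (β ^ k - α ^ k) := by rw [hgeom]
        _ = L * β ^ k := by ring
  exact key k hle
end

section
/- Let G = (V,E) be a stage-T scenario tree with nodal probabilities π satisfying π_0 = 1, π_i > 0, and Σ_{j∈children(i)} π_j = π_i, and let π_{i|j} = π_i/π_j. Given node matrices {Φ̲_i} over the nodes at stages 1 through T, define the block matrix Φ̃ by Φ̃_{ij} = (π_{i|j})^{1/2} Φ̲_i if i is a child of j and 0 otherwise. If {Φ̲_i} is (L,α)-stable on the tree with L ≥ 1 and α ∈ (0,1), i.e. ‖∏ Φ̲_{i⇀j}‖ ≤ L α^{t(j)−t(i)} for every node i and every descendant j (ordered product along the path from i, exclusive, to j), then I − Φ̃ is invertible and ‖(I − Φ̃)^{−1}‖ ≤ L/(1 − α). -/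
open Matrix BigOperators

/-- A stage-`T` scenario tree: a finite rooted tree, encoded by the parent map, in which
every leaf is at distance `T` from the root (every node at stage `< T` has a child). -/
structure ScenarioTree (T : ℕ) where
  V : Type
  [finV : Fintype V]
  [deqV : DecidableEq V]
  root : V
  parent : V → V
  stage : V → ℕ
  stage_root : stage root = 0
  parent_root : parent root = root
  stage_parent : ∀ i, i ≠ root → stage (parent i) + 1 = stage i
  root_unique : ∀ i, stage i = 0 → i = root
  stage_le : ∀ i, stage i ≤ T
  extend : ∀ i, stage i < T → ∃ j, parent j = i ∧ stage j = stage i + 1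

attribute [instance] ScenarioTree.finV ScenarioTree.deqV

namespace ScenarioTree

variable {T : ℕ} (G : ScenarioTree T)

/-- The ancestor of `j` at stage `t` (for `t ≤ stage j`). -/
def anc (j : G.V) (t : ℕ) : G.V := G.parent^[G.stage j - t] j

/-- `j` is a descendant of `k` (every node is a descendant of itself). -/
def Desc (k j : G.V) : Prop := G.stage k ≤ G.stage j ∧ G.anc j (G.stage k) = k

/-- The set of children of a node. -/
def children (i : G.V) : Finset G.V :=
  Finset.univ.filter fun j => G.parent j = i ∧ j ≠ G.root

open Classical in
/-- The stage-`t` nodes. -/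
noncomputable def stageNodes (t : ℕ) : Finset G.V :=
  Finset.univ.filter fun i => G.stage i = t

open Classical in
/-- The descendants of `k` within the prediction window of length `W`
(stages `t(k),…,t(k)+W`). -/
noncomputable def subNodes (k : G.V) (W : ℕ) : Finset G.V :=
  Finset.univ.filter fun i => G.Desc k i ∧ G.stage i ≤ G.stage k + W

/-- Ordered product of the nodal matrices along the path ending at `j`, with `c` factors:
`Φ̲_j * Φ̲_{a(j)} * ⋯` (so `pathProd G Φn j (t(j) − t(i))` is `∏ Φ̲_{i⇀j}`). -/
def pathProd {n : ℕ} (Φn : G.V → Matrix (Fin n) (Fin n) ℝ) (j : G.V) :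
    ℕ → Matrix (Fin n) (Fin n) ℝ
  | 0 => 1
  | c + 1 => pathProd Φn j c * Φn (G.parent^[c] j)

/-- Tree `(L,α)`-stability of a family of nodal matrices: the ordered product along the
path from any node `i` (exclusive) to any descendant `j` has norm `≤ L α^{t(j)−t(i)}`. -/
def TreeStable {n : ℕ} (Φn : G.V → Matrix (Fin n) (Fin n) ℝ) (L α : ℝ) : Prop :=
  ∀ i j : G.V, G.Desc i j →
    opNorm (G.pathProd Φn j (G.stage j - G.stage i)) ≤ L * α ^ (G.stage j - G.stage i)

end ScenarioTree

/-- The event that the history `ξ_{0:t(j)}` equals the nodal realizations along the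
root-to-`j` path. -/
def NodeEvent {Ξ : Type} {T : ℕ} (proc : FiniteProcess Ξ) (G : ScenarioTree T)
    (ξn : G.V → Ξ) (j : G.V) (s : proc.S) : Prop :=
  ∀ t ≤ G.stage j, proc.ξ t s = ξn (G.anc j t)

open Classical in
/-- Conditional expectation of `f` given the node event of `k`. -/
noncomputable def nodeCexp {Ξ : Type} {T : ℕ} (proc : FiniteProcess Ξ) (G : ScenarioTree T)
    (ξn : G.V → Ξ) (k : G.V) (f : proc.S → ℝ) : ℝ :=
  (∑ s, if NodeEvent proc G ξn k s then proc.P s * f s else 0) /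
    (∑ s, if NodeEvent proc G ξn k s then proc.P s else 0)

/-- The scenario tree `(G, ξ̲, π)` represents the finite-support process `ξ` conditioned
on `ξ₀ = ξ₀(sb)`:
(a) a sequence is a support prefix iff it is the nodal-realization sequence of a
root-to-node path (with the stage-`τ` ancestor realizing the first `τ+1` entries);
(b) `π` is a unit mass at the root flowing down the tree with positive values;
(c) `P[ξ_{0:t(j)} = ξ̲_{0→j} ∣ ξ_{0:t(k)} = ξ̲_{0→k}] = π_j/π_k` for ancestors `k` of `j`. -/
def Represents {Ξ : Type} {T : ℕ} (proc : FiniteProcess Ξ) (sb : proc.S)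
    (G : ScenarioTree T) (ξn : G.V → Ξ) (πn : G.V → ℝ) : Prop :=
  (∀ (ζ : ℕ → Ξ) (τ t : ℕ), τ ≤ t → t ≤ T →
    ((∃ s : proc.S, proc.ξ 0 s = proc.ξ 0 sb ∧ ∀ v ≤ t, proc.ξ v s = ζ v) ↔
      ∃ k j : G.V, G.stage k = τ ∧ G.stage j = t ∧ G.Desc k j ∧
        (∀ v ≤ τ, ξn (G.anc k v) = ζ v) ∧ (∀ v ≤ t, ξn (G.anc j v) = ζ v))) ∧
  (πn G.root = 1 ∧ (∀ i, 0 < πn i) ∧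
    ∀ i : G.V, G.stage i < T → ∑ j ∈ G.children i, πn j = πn i) ∧
  (∀ k j : G.V, G.Desc k j →
    proc.prob (fun s => NodeEvent proc G ξn j s) =
      πn j / πn k * proc.prob (fun s => NodeEvent proc G ξn k s))

/-- The probability-scaled block-subdiagonal matrix `Φ̃` built from nodal matrices:
`Φ̃_{ij} = (π_i/π_j)^{1/2} Φ̲_i` if `i` is a child of `j`, and `0` otherwise,
flattened to a matrix indexed by `V × Fin n`. -/
noncomputable def scaledShift {T n : ℕ} (G : ScenarioTree T) (πn : G.V → ℝ)
    (Φn : G.V → Matrix (Fin n) (Fin n) ℝ) :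
    Matrix (G.V × Fin n) (G.V × Fin n) ℝ :=
  fun p q =>
    if G.parent p.1 = q.1 ∧ p.1 ≠ G.root then
      Real.sqrt (πn p.1 / πn q.1) * Φn p.1 p.2 q.2
    else 0

section OpNormFacts
variable {m n : Type*} [Fintype m] [Fintype n] [DecidableEq n]

lemma sqnorm_nonneg (v : m → ℝ) : 0 ≤ sqnorm v :=
  Finset.sum_nonneg fun _ _ => sq_nonneg _

lemma euclid_norm_sq (x : EuclideanSpace ℝ m) :
    ‖x‖ ^ 2 = sqnorm (fun i => x i) := by
  rw [EuclideanSpace.norm_eq, Real.sq_sqrt (by positivity)]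
  simp [sqnorm, Real.norm_eq_abs, sq_abs]

lemma opNorm_nonneg (A : Matrix m n ℝ) : 0 ≤ opNorm A := norm_nonneg _

lemma sqnorm_mulVec_le (A : Matrix m n ℝ) (v : n → ℝ) :
    sqnorm (A.mulVec v) ≤ opNorm A ^ 2 * sqnorm v := by
  set x : EuclideanSpace ℝ n := (WithLp.equiv 2 (n → ℝ)).symm v with hx
  have h := (LinearMap.toContinuousLinearMap (Matrix.toEuclideanLin A)).le_opNorm x
  have happ : (LinearMap.toContinuousLinearMap (Matrix.toEuclideanLin A)) x
      = (WithLp.equiv 2 (m → ℝ)).symm (A.mulVec v) := by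
    rfl
  have h2 : ‖(WithLp.equiv 2 (m → ℝ)).symm (A.mulVec v)‖ ≤ opNorm A * ‖x‖ := by
    rw [← happ]; exact h
  have h3 := pow_le_pow_left₀ (norm_nonneg _) h2 2
  rw [mul_pow] at h3
  have e1 : ‖(WithLp.equiv 2 (m → ℝ)).symm (A.mulVec v)‖ ^ 2 = sqnorm (A.mulVec v) := by
    rw [euclid_norm_sq]; rfl
  have e2 : ‖x‖ ^ 2 = sqnorm v := by rw [euclid_norm_sq]; rfl
  rw [e1, e2] at h3; exact h3

lemma opNorm_le_of_sqnorm_le (A : Matrix m n ℝ) {C : ℝ} (hC : 0 ≤ C)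
    (h : ∀ v : n → ℝ, sqnorm (A.mulVec v) ≤ C ^ 2 * sqnorm v) : opNorm A ≤ C := by
  refine ContinuousLinearMap.opNorm_le_bound _ hC fun x => ?_
  have h1 : ‖(LinearMap.toContinuousLinearMap (Matrix.toEuclideanLin A)) x‖ ^ 2
      ≤ (C * ‖x‖) ^ 2 := by
    have happ : (LinearMap.toContinuousLinearMap (Matrix.toEuclideanLin A)) x
        = (WithLp.equiv 2 (m → ℝ)).symm (A.mulVec (fun i => x i)) := by
      rfl
    rw [happ, mul_pow]
    have e1 : ‖(WithLp.equiv 2 (m → ℝ)).symm (A.mulVec (fun i => x i))‖ ^ 2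
        = sqnorm (A.mulVec fun i => x i) := by rw [euclid_norm_sq]; rfl
    have e2 : ‖x‖ ^ 2 = sqnorm (fun i => x i) := euclid_norm_sq x
    rw [e1, e2]
    exact h _
  exact (pow_le_pow_iff_left₀ (norm_nonneg _) (by positivity) (by norm_num)).mp h1

lemma opNorm_sum_le {ι : Type*} (s : Finset ι) (f : ι → Matrix m n ℝ) :
    opNorm (∑ k ∈ s, f k) ≤ ∑ k ∈ s, opNorm (f k) := by
  unfold opNorm
  rw [map_sum, map_sum]
  exact norm_sum_le _ _

end OpNormFacts
namespace ScenarioTree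
variable {T : ℕ} (G : ScenarioTree T)

lemma ne_root_of_stage_pos {i : G.V} (h : 0 < G.stage i) : i ≠ G.root := by
  intro e; rw [e, G.stage_root] at h; omega

lemma stage_pos_of_ne_root {i : G.V} (h : i ≠ G.root) : 0 < G.stage i := by
  rcases Nat.eq_zero_or_pos (G.stage i) with h0 | h0
  · exact absurd (G.root_unique i h0) h
  · exact h0

lemma stage_iterate (i : G.V) : ∀ k, k ≤ G.stage i →
    G.stage (G.parent^[k] i) = G.stage i - k := by
  intro k
  induction k with
  | zero => simp
  | succ k ih =>
    intro hk
    have h1 : G.stage (G.parent^[k] i) = G.stage i - k := ih (by omega)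
    have hpos : 0 < G.stage (G.parent^[k] i) := by omega
    have hne : G.parent^[k] i ≠ G.root := G.ne_root_of_stage_pos hpos
    have := G.stage_parent _ hne
    rw [Function.iterate_succ_apply']
    omega

/-- Sum of probabilities of depth-`k` descendants of `i` is at most `πn i`. -/
lemma sum_depth_desc (πn : G.V → ℝ) (hpos : ∀ i, 0 < πn i)
    (hsum : ∀ i : G.V, G.stage i < T → ∑ j ∈ G.children i, πn j = πn i)
    (i : G.V) : ∀ k : ℕ,
    ∑ j ∈ Finset.univ.filter (fun j => k ≤ G.stage j ∧ G.parent^[k] j = i), πn j ≤ πn i := by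
  intro k
  induction k with
  | zero =>
    have : Finset.univ.filter (fun j => 0 ≤ G.stage j ∧ G.parent^[0] j = i) = {i} := by
      ext j; simp
    rw [this, Finset.sum_singleton]
  | succ k ih =>
    have hset : Finset.univ.filter (fun j => k + 1 ≤ G.stage j ∧ G.parent^[k+1] j = i)
        = (Finset.univ.filter (fun j => k ≤ G.stage j ∧ G.parent^[k] j = i)).biUnion
            G.children := by
      ext j
      simp only [Finset.mem_filter, Finset.mem_univ, true_and, Finset.mem_biUnion,
        children, Finset.mem_filter]
      constructor
      · rintro ⟨h1, h2⟩
        have hne : j ≠ G.root := G.ne_root_of_stage_pos (by omega)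
        have hst := G.stage_parent j hne
        refine ⟨G.parent j, ⟨by omega, ?_⟩, rfl, hne⟩
        rw [← Function.iterate_succ_apply]; exact h2
      · rintro ⟨m, ⟨hm1, hm2⟩, hpj, hne⟩
        have hst := G.stage_parent j hne
        rw [hpj] at hst
        constructor
        · omega
        · rw [Function.iterate_succ_apply, hpj]; exact hm2
    rw [hset, Finset.sum_biUnion]
    · calc ∑ m ∈ Finset.univ.filter (fun j => k ≤ G.stage j ∧ G.parent^[k] j = i),
            ∑ j ∈ G.children m, πn j
          ≤ ∑ m ∈ Finset.univ.filter (fun j => k ≤ G.stage j ∧ G.parent^[k] j = i), πn m := by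
            refine Finset.sum_le_sum fun m _ => ?_
            rcases lt_or_ge (G.stage m) T with hlt | hge
            · exact le_of_eq (hsum m hlt)
            · have hT : G.stage m = T := le_antisymm (G.stage_le m) hge
              have : G.children m = ∅ := by
                ext j
                simp only [children, Finset.mem_filter, Finset.mem_univ, true_and,
                  Finset.notMem_empty, iff_false]
                rintro ⟨hpj, hne⟩
                have := G.stage_parent j hne
                have := G.stage_le j
                rw [hpj] at *
                omega
              rw [this, Finset.sum_empty]
              exact le_of_lt (hpos m)
        _ ≤ πn i := ih
    · intro m₁ _ m₂ _ hne
      simp only [Finset.disjoint_left]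
      intro j hj1 hj2
      simp only [children, Finset.mem_filter] at hj1 hj2
      exact hne (by rw [← hj1.2.1, hj2.2.1])

end ScenarioTree
open Classical in
lemma pow_scaledShift_apply {T n : ℕ} (G : ScenarioTree T) (πn : G.V → ℝ)
    (hpos : ∀ i, 0 < πn i) (Φn : G.V → Matrix (Fin n) (Fin n) ℝ) :
    ∀ (k : ℕ) (p q : G.V × Fin n),
    ((scaledShift G πn Φn) ^ k) p q =
      if k ≤ G.stage p.1 ∧ G.parent^[k] p.1 = q.1 then
        Real.sqrt (πn p.1 / πn q.1) * G.pathProd Φn p.1 k p.2 q.2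
      else 0 := by
  intro k
  induction k with
  | zero =>
    intro p q
    rw [pow_zero]
    by_cases h : p.1 = q.1
    · rw [if_pos ⟨Nat.zero_le _, h⟩]
      have : πn p.1 / πn q.1 = 1 := by rw [h]; exact div_self (ne_of_gt (hpos q.1))
      rw [this, Real.sqrt_one, one_mul]
      show (1 : Matrix (G.V × Fin n) (G.V × Fin n) ℝ) p q = (1 : Matrix (Fin n) (Fin n) ℝ) p.2 q.2
      by_cases h2 : p.2 = q.2
      · have : p = q := Prod.ext h h2
        rw [this, Matrix.one_apply_eq, Matrix.one_apply_eq]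
      · rw [Matrix.one_apply_ne (fun e => h2 (congrArg Prod.snd e)), Matrix.one_apply_ne h2]
    · rw [if_neg (fun hc => h hc.2)]
      exact Matrix.one_apply_ne (fun e => h (congrArg Prod.fst e))
  | succ k ih =>
    intro p q
    rw [pow_succ, Matrix.mul_apply]
    by_cases hc : k + 1 ≤ G.stage p.1 ∧ G.parent^[k+1] p.1 = q.1
    · rw [if_pos hc]
      obtain ⟨hk1, hq⟩ := hc
      set m : G.V := G.parent^[k] p.1 with hm
      have hkle : k ≤ G.stage p.1 := by omega
      have hstm : G.stage m = G.stage p.1 - k := G.stage_iterate p.1 k hkle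
      have hmne : m ≠ G.root := G.ne_root_of_stage_pos (by omega)
      have hpm : G.parent m = q.1 := by
        have := Function.iterate_succ_apply' G.parent k p.1
        rw [hm, ← this]; exact hq
      rw [Fintype.sum_prod_type]
      rw [Finset.sum_eq_single m]
      · have : ∀ b : Fin n,
            ((scaledShift G πn Φn) ^ k) p (m, b) * scaledShift G πn Φn (m, b) q
            = (Real.sqrt (πn p.1 / πn m) * Real.sqrt (πn m / πn q.1)) *
                (G.pathProd Φn p.1 k p.2 b * Φn m b q.2) := by
          intro b
          rw [ih p (m, b)]
          rw [if_pos ⟨hkle, rfl⟩]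
          unfold scaledShift
          rw [if_pos ⟨hpm, hmne⟩]
          ring
        rw [Finset.sum_congr rfl (fun b _ => this b)]
        rw [← Finset.mul_sum]
        have hsq : Real.sqrt (πn p.1 / πn m) * Real.sqrt (πn m / πn q.1)
            = Real.sqrt (πn p.1 / πn q.1) := by
          rw [← Real.sqrt_mul (le_of_lt (div_pos (hpos _) (hpos _)))]
          rw [div_mul_div_comm, mul_comm (πn m)]
          rw [mul_div_mul_right _ _ (ne_of_gt (hpos m))]
        rw [hsq, show G.pathProd Φn p.1 (k+1) = G.pathProd Φn p.1 k * Φn (G.parent^[k] p.1)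
          from rfl, Matrix.mul_apply]
      · intro r1 _ hr1
        apply Finset.sum_eq_zero
        intro b _
        rw [ih p (r1, b), if_neg (fun hc2 => hr1 hc2.2.symm), zero_mul]
      · intro hmem; exact absurd (Finset.mem_univ m) hmem
    · rw [if_neg hc]
      apply Finset.sum_eq_zero
      intro r _
      rcases Classical.em (k ≤ G.stage p.1 ∧ G.parent^[k] p.1 = r.1) with h1 | h1
      · rcases Classical.em (G.parent r.1 = q.1 ∧ r.1 ≠ G.root) with h2 | h2
        · exfalso
          apply hc
          have hst := G.stage_iterate p.1 k h1.1
          have hrpos : 0 < G.stage r.1 := G.stage_pos_of_ne_root h2.2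
          rw [← h1.2] at hrpos
          constructor
          · omega
          · rw [Function.iterate_succ_apply', h1.2, h2.1]
        · unfold scaledShift
          rw [if_neg h2, mul_zero]
      · rw [ih p r, if_neg h1, zero_mul]
open Classical in
lemma mulVec_pow_scaledShift {T n : ℕ} (G : ScenarioTree T) (πn : G.V → ℝ)
    (hpos : ∀ i, 0 < πn i) (Φn : G.V → Matrix (Fin n) (Fin n) ℝ) (k : ℕ)
    (v : G.V × Fin n → ℝ) (p : G.V × Fin n) :
    ((scaledShift G πn Φn) ^ k).mulVec v p =
      if k ≤ G.stage p.1 then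
        Real.sqrt (πn p.1 / πn (G.parent^[k] p.1)) *
          (G.pathProd Φn p.1 k).mulVec (fun b => v (G.parent^[k] p.1, b)) p.2
      else 0 := by
  have hmv : ((scaledShift G πn Φn) ^ k).mulVec v p
      = ∑ q, ((scaledShift G πn Φn) ^ k) p q * v q := by
    simp [Matrix.mulVec, dotProduct]
  rw [hmv]
  by_cases hk : k ≤ G.stage p.1
  · rw [if_pos hk, Fintype.sum_prod_type]
    rw [Finset.sum_eq_single (G.parent^[k] p.1)]
    · have : ∀ b : Fin n, ((scaledShift G πn Φn) ^ k) p (G.parent^[k] p.1, b)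
          * v (G.parent^[k] p.1, b)
          = Real.sqrt (πn p.1 / πn (G.parent^[k] p.1)) *
              (G.pathProd Φn p.1 k p.2 b * v (G.parent^[k] p.1, b)) := by
        intro b
        rw [pow_scaledShift_apply G πn hpos Φn k p (G.parent^[k] p.1, b),
          if_pos ⟨hk, rfl⟩]
        ring
      rw [Finset.sum_congr rfl (fun b _ => this b), ← Finset.mul_sum]
      rfl
    · intro r1 _ hr1
      apply Finset.sum_eq_zero
      intro b _
      rw [pow_scaledShift_apply G πn hpos Φn k p (r1, b),
        if_neg (fun hc => hr1 hc.2.symm), zero_mul]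
    · intro hmem; exact absurd (Finset.mem_univ _) hmem
  · rw [if_neg hk]
    apply Finset.sum_eq_zero
    intro q _
    rw [pow_scaledShift_apply G πn hpos Φn k p q, if_neg (fun hc => hk hc.1), zero_mul]

open Classical in
lemma opNorm_pow_scaledShift_le {T n : ℕ} (G : ScenarioTree T) (πn : G.V → ℝ)
    (hpos : ∀ i, 0 < πn i)
    (hsum : ∀ i : G.V, G.stage i < T → ∑ j ∈ G.children i, πn j = πn i)
    (Φn : G.V → Matrix (Fin n) (Fin n) ℝ) (L α : ℝ) (hL0 : 0 ≤ L) (hα0 : 0 < α)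
    (hstab : G.TreeStable Φn L α) (k : ℕ) :
    opNorm ((scaledShift G πn Φn) ^ k) ≤ L * α ^ k := by
  apply opNorm_le_of_sqnorm_le _ (by positivity)
  intro v
  set B : ℝ := (L * α ^ k) ^ 2 with hB
  have hB0 : 0 ≤ B := sq_nonneg _
  set s : G.V → ℝ := fun i => sqnorm (fun b => v (i, b)) with hs
  have hs0 : ∀ i, 0 ≤ s i := fun i => sqnorm_nonneg _
  -- step 1 & 2: pointwise bound on the fiber of j
  have step12 : sqnorm (((scaledShift G πn Φn) ^ k).mulVec v)
      ≤ ∑ j : G.V, if k ≤ G.stage j then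
          (πn j / πn (G.parent^[k] j)) * (B * s (G.parent^[k] j)) else 0 := by
    unfold sqnorm
    rw [Fintype.sum_prod_type]
    apply Finset.sum_le_sum
    intro j _
    by_cases hk : k ≤ G.stage j
    · have hterm : ∀ a : Fin n, (((scaledShift G πn Φn) ^ k).mulVec v (j, a)) ^ 2
          = (πn j / πn (G.parent^[k] j)) *
              ((G.pathProd Φn j k).mulVec (fun b => v (G.parent^[k] j, b)) a) ^ 2 := by
        intro a
        rw [mulVec_pow_scaledShift G πn hpos Φn k v (j, a), if_pos hk, mul_pow,
          Real.sq_sqrt (le_of_lt (div_pos (hpos _) (hpos _)))]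
      rw [Finset.sum_congr rfl (fun a _ => hterm a), ← Finset.mul_sum, if_pos hk]
      apply mul_le_mul_of_nonneg_left _ (le_of_lt (div_pos (hpos _) (hpos _)))
      -- ∑ a, (mulVec ..) ^2 = sqnorm (mulVec ..) ≤ B * s (anc)
      have hdesc : G.Desc (G.parent^[k] j) j := by
        constructor
        · rw [G.stage_iterate j k hk]; omega
        · show G.parent^[G.stage j - G.stage (G.parent^[k] j)] j = G.parent^[k] j
          rw [G.stage_iterate j k hk]
          congr 1
          omega
      have hop : opNorm (G.pathProd Φn j k) ≤ L * α ^ k := by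
        have := hstab (G.parent^[k] j) j hdesc
        rw [G.stage_iterate j k hk] at this
        have he : G.stage j - (G.stage j - k) = k := by omega
        rw [he] at this
        exact this
      calc (∑ a, ((G.pathProd Φn j k).mulVec (fun b => v (G.parent^[k] j, b)) a) ^ 2)
          = sqnorm ((G.pathProd Φn j k).mulVec (fun b => v (G.parent^[k] j, b))) := rfl
        _ ≤ opNorm (G.pathProd Φn j k) ^ 2 * s (G.parent^[k] j) :=
            sqnorm_mulVec_le _ _
        _ ≤ B * s (G.parent^[k] j) := by
            apply mul_le_mul_of_nonneg_right _ (hs0 _)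
            exact pow_le_pow_left₀ (opNorm_nonneg _) hop 2
    · rw [if_neg hk]
      apply le_of_eq
      apply Finset.sum_eq_zero
      intro a _
      rw [mulVec_pow_scaledShift G πn hpos Φn k v (j, a), if_neg hk]
      norm_num
  refine step12.trans ?_
  -- steps 3-6: regroup by the ancestor and use the probability mass bound
  set F : Finset G.V := Finset.univ.filter (fun j => k ≤ G.stage j) with hF
  have e3 : (∑ j : G.V, if k ≤ G.stage j then
        (πn j / πn (G.parent^[k] j)) * (B * s (G.parent^[k] j)) else 0)
      = ∑ j ∈ F, (πn j / πn (G.parent^[k] j)) * (B * s (G.parent^[k] j)) :=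
    (Finset.sum_filter _ _).symm
  have e4 : ∑ j ∈ F, (πn j / πn (G.parent^[k] j)) * (B * s (G.parent^[k] j))
      = ∑ i : G.V, ∑ j ∈ F.filter (fun j => G.parent^[k] j = i),
          (πn j / πn (G.parent^[k] j)) * (B * s (G.parent^[k] j)) :=
    (Finset.sum_fiberwise_of_maps_to (fun j _ => Finset.mem_univ (G.parent^[k] j)) _).symm
  rw [e3, e4]
  have hinner : ∀ i : G.V, (∑ j ∈ F.filter (fun j => G.parent^[k] j = i),
      (πn j / πn (G.parent^[k] j)) * (B * s (G.parent^[k] j))) ≤ B * s i := by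
    intro i
    have hcongr : ∀ j ∈ F.filter (fun j => G.parent^[k] j = i),
        (πn j / πn (G.parent^[k] j)) * (B * s (G.parent^[k] j))
          = πn j * (B * s i / πn i) := by
      intro j hj
      have hji : G.parent^[k] j = i := (Finset.mem_filter.mp hj).2
      rw [hji]
      ring
    rw [Finset.sum_congr rfl hcongr, ← Finset.sum_mul]
    have hset : F.filter (fun j => G.parent^[k] j = i)
        = Finset.univ.filter (fun j => k ≤ G.stage j ∧ G.parent^[k] j = i) := by
      rw [hF, Finset.filter_filter]
    rw [hset]
    have hmass := G.sum_depth_desc πn hpos hsum i k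
    calc (∑ j ∈ Finset.univ.filter (fun j => k ≤ G.stage j ∧ G.parent^[k] j = i), πn j)
            * (B * s i / πn i)
        ≤ πn i * (B * s i / πn i) := by
          exact mul_le_mul_of_nonneg_right hmass
            (div_nonneg (mul_nonneg hB0 (hs0 i)) (le_of_lt (hpos i)))
      _ = B * s i := by
          rw [mul_comm, div_mul_cancel₀ _ (ne_of_gt (hpos i))]
  calc (∑ i : G.V, ∑ j ∈ F.filter (fun j => G.parent^[k] j = i),
          (πn j / πn (G.parent^[k] j)) * (B * s (G.parent^[k] j)))
      ≤ ∑ i : G.V, B * s i := Finset.sum_le_sum (fun i _ => hinner i)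
    _ = B * sqnorm v := by
        rw [← Finset.mul_sum]
        congr 1
        unfold sqnorm
        rw [Fintype.sum_prod_type]
        rfl
/-- Lemma `basic`, part (b).  On a stage-`T` scenario tree with nodal
probabilities `π` (`π₀ = 1`, `π > 0`, children masses sum to the parent's), if the nodal
matrices `{Φ̲_i}` are `(L,α)`-stable on the tree with `L ≥ 1` and `α ∈ (0,1)`, then
`I − Φ̃` is invertible and `‖(I − Φ̃)⁻¹‖ ≤ L/(1−α)`. -/
theorem scaled_shift_resolvent_bound
    {T n : ℕ} (G : ScenarioTree T) (πn : G.V → ℝ)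
    (hroot : πn G.root = 1) (hpos : ∀ i, 0 < πn i)
    (hsum : ∀ i : G.V, G.stage i < T → ∑ j ∈ G.children i, πn j = πn i)
    (Φn : G.V → Matrix (Fin n) (Fin n) ℝ)
    (L α : ℝ) (hL : 1 ≤ L) (hα0 : 0 < α) (hα1 : α < 1)
    (hstab : G.TreeStable Φn L α) :
    IsUnit (1 - scaledShift G πn Φn) ∧
      opNorm (1 - scaledShift G πn Φn)⁻¹ ≤ L / (1 - α) := by
  set N := scaledShift G πn Φn with hN
  have hnil : N ^ (T + 1) = 0 := by
    ext p q
    rw [hN, pow_scaledShift_apply G πn hpos Φn (T + 1) p q, if_neg]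
    · rfl
    · rintro ⟨h1, -⟩
      have := G.stage_le p.1
      omega
  set S := ∑ k ∈ Finset.range (T + 1), N ^ k with hS
  have hgeom := geom_sum_mul N (T + 1)
  rw [hnil] at hgeom
  have h1 : S * (1 - N) = 1 := by
    have e : S * (1 - N) = -(S * (N - 1)) := by
      noncomm_ring
    rw [e, hgeom, zero_sub, neg_neg]
  have hunit : IsUnit (1 - N) := (Matrix.isUnit_iff_isUnit_det _).mpr (Matrix.isUnit_det_of_left_inverse h1)
  have hinv : (1 - N)⁻¹ = S := Matrix.inv_eq_left_inv h1
  refine ⟨hunit, ?_⟩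
  rw [hinv]
  have hgs : ∑ k ∈ Finset.range (T + 1), α ^ k ≤ 1 / (1 - α) := by
    rw [geom_sum_eq (ne_of_lt hα1)]
    have hpos1 : (0 : ℝ) < 1 - α := by linarith
    have e : (α ^ (T + 1) - 1) / (α - 1) = (1 - α ^ (T + 1)) / (1 - α) := by
      rw [← neg_div_neg_eq]
      ring_nf
    rw [e]
    have hp : (0:ℝ) ≤ α ^ (T + 1) := pow_nonneg (le_of_lt hα0) _
    gcongr
    linarith
  calc opNorm S ≤ ∑ k ∈ Finset.range (T + 1), opNorm (N ^ k) := opNorm_sum_le _ _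
    _ ≤ ∑ k ∈ Finset.range (T + 1), L * α ^ k :=
        Finset.sum_le_sum fun k _ =>
          opNorm_pow_scaledShift_le G πn hpos hsum Φn L α (by linarith) hα0 hstab k
    _ = L * ∑ k ∈ Finset.range (T + 1), α ^ k := by rw [Finset.mul_sum]
    _ ≤ L * (1 / (1 - α)) := by
        apply mul_le_mul_of_nonneg_left hgs (by linarith)
    _ = L / (1 - α) := mul_one_div _ _
end
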